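/- Let α ≥ β > 0 and s, t ∈ ℝ with s² + t² = 1 and t > 0, and let K be the triangle with vertices x₁ = (0,0), x₂ = (α,0), x₃ = (βs, βt). Suppose the edge joining x₂ and x₃ is the longest edge of K, i.e. |x₂ − x₃| ≥ α. Then (1 + |s|)/√(1 − |s|) ≤ 4√2 · R_K/α, where R_K is the circumradius of K. -/

import Mathlib

open MeasureTheory

noncomputable section

abbrev E2 : Type := EuclideanSpace ℝ (Fin 2)

/-- The point (a, b) in the Euclidean plane. -/
def pt (a b : ℝ) : E2 := WithLp.toLp 2 ![a, b]

/-- First standard basis vector. -/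
def vex : E2 := pt 1 0
/-- Second standard basis vector. -/
def vey : E2 := pt 0 1

/-- Euclidean dot product on the plane. -/
def dot2 (v w : E2) : ℝ := v 0 * w 0 + v 1 * w 1

/-- rot (w₁, w₂) = (w₂, −w₁). -/
def rot (w : E2) : E2 := pt (w 1) (-(w 0))

/-- Flux of a vector field across the (oriented) segment from `a` to `b`:
∫₀¹ q(a + t(b − a)) · rot(b − a) dt, the line integral of the normal component. -/
def flux (q : E2 → E2) (a b : E2) : ℝ :=
  ∫ t in (0:ℝ)..1, dot2 (q (a + t • (b - a))) (rot (b - a))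

/-- Squared Euclidean norm of the gradient of a scalar function. -/
def gradSq (v : E2 → ℝ) (x : E2) : ℝ :=
  (fderiv ℝ v x vex) ^ 2 + (fderiv ℝ v x vey) ^ 2

/-- Gradient vector of a scalar function. -/
def gradVec (v : E2 → ℝ) (x : E2) : E2 :=
  pt (fderiv ℝ v x vex) (fderiv ℝ v x vey)

/-- Squared Frobenius norm of the Jacobian of a vector field
(sum of squares of the four first-order partial derivatives). -/
def frobSq (q : E2 → E2) (x : E2) : ℝ :=
  (fderiv ℝ q x vex 0) ^ 2 + (fderiv ℝ q x vey 0) ^ 2 +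
  (fderiv ℝ q x vex 1) ^ 2 + (fderiv ℝ q x vey 1) ^ 2

/-- Divergence of a planar vector field. -/
def divg (q : E2 → E2) (x : E2) : ℝ := fderiv ℝ q x vex 0 + fderiv ℝ q x vey 1

/-- The reference triangle with vertices (0,0), (1,0), (0,1). -/
def Khat : Set E2 := convexHull ℝ {pt 0 0, pt 1 0, pt 0 1}

/-- The triangle with vertices (0,0), (α,0), (0,β). -/
def Kab (a b : ℝ) : Set E2 := convexHull ℝ {pt 0 0, pt a 0, pt 0 b}

/-- Matrix–vector multiplication for 2×2 matrices acting on the plane. -/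
def matVec (A : Matrix (Fin 2) (Fin 2) ℝ) (x : E2) : E2 :=
  pt (A 0 0 * x 0 + A 0 1 * x 1) (A 1 0 * x 0 + A 1 1 * x 1)

/-- Squared Frobenius norm of a 2×2 matrix. -/
def mFrobSq (M : Matrix (Fin 2) (Fin 2) ℝ) : ℝ :=
  M 0 0 ^ 2 + M 0 1 ^ 2 + M 1 0 ^ 2 + M 1 1 ^ 2



lemma pt_app0 (a b : ℝ) : pt a b 0 = a := rfl
lemma pt_app1 (a b : ℝ) : pt a b 1 = b := rfl

lemma dist_sq2 (x y : E2) : dist x y ^ 2 = (x 0 - y 0)^2 + (x 1 - y 1)^2 := by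
  rw [EuclideanSpace.dist_eq, Real.sq_sqrt (by positivity)]
  simp [Fin.sum_univ_two, Real.dist_eq, sq_abs]


lemma stmt13_endgame (α a s t R : ℝ) (hα : 0 < α) (hst : s ^ 2 + t ^ 2 = 1)
    (ht : 0 < t) (hlong : α ≤ a) (hR0 : 0 ≤ R) (hkey : 2*R*t = a) :
    (1 + |s|) / Real.sqrt (1 - |s|) ≤ 4 * Real.sqrt 2 * (R / α) := by
  have hs2 : s^2 < 1 := by nlinarith
  have hu0 : 0 ≤ |s| := abs_nonneg s
  have hu1 : |s| < 1 := by nlinarith [sq_abs s]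
  set u := |s| with hu_def
  have ht2 : t^2 = (1-u)*(1+u) := by linear_combination hst + sq_abs s
  set P := Real.sqrt (1-u) with hP_def
  set Q := Real.sqrt (1+u) with hQ_def
  have hP0 : 0 < P := Real.sqrt_pos.mpr (by linarith)
  have hQ0 : 0 < Q := Real.sqrt_pos.mpr (by linarith)
  have hP2 : P^2 = 1 - u := Real.sq_sqrt (by linarith)
  have hQ2 : Q^2 = 1 + u := Real.sq_sqrt (by linarith)
  have hQle : Q ≤ Real.sqrt 2 := Real.sqrt_le_sqrt (by linarith)
  have h2 : Real.sqrt 2 ^ 2 = 2 := Real.sq_sqrt (by norm_num)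
  have hs20 : (0:ℝ) < Real.sqrt 2 := Real.sqrt_pos.mpr (by norm_num)
  have ht_eq : t = P*Q := by
    have hfac : (t - P*Q)*(t + P*Q) = 0 := by
      have h' : t^2 = (P*Q)^2 := by rw [mul_pow, hP2, hQ2]; exact ht2
      linear_combination h'
    rcases mul_eq_zero.mp hfac with h | h
    · linarith
    · linarith [mul_pos hP0 hQ0]
  have hcube : (1+u)*Q ≤ 2*Real.sqrt 2 := by
    calc (1+u)*Q = Q^3 := by rw [← hQ2]; ring
      _ ≤ (Real.sqrt 2)^3 := by gcongr
      _ = 2*Real.sqrt 2 := by rw [pow_succ, h2]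
  have hfin : (1+u)*Q*α ≤ 2*Real.sqrt 2 * a := by
    have h1' : (1+u)*Q*α ≤ 2*Real.sqrt 2*α :=
      mul_le_mul_of_nonneg_right hcube hα.le
    have h2' : 2*Real.sqrt 2*α ≤ 2*Real.sqrt 2*a :=
      mul_le_mul_of_nonneg_left hlong (by positivity)
    linarith
  have hR : R = a/(2*(P*Q)) := by
    rw [ht_eq] at hkey
    field_simp
    linarith
  have heq : 4*Real.sqrt 2*(R/α) = 2*Real.sqrt 2*a/(P*Q*α) := by
    rw [hR]
    field_simp
    ring
  rw [heq, div_le_div_iff₀ hP0 (by positivity : (0:ℝ) < P*Q*α)]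
  have hmul := mul_le_mul_of_nonneg_right hfin hP0.le
  nlinarith [hmul]

/-- Geometric inequality `(1 + |s|)/√(1 − |s|) ≤ 4√2 R_K/α` for the triangle with
vertices (0,0), (α,0), (βs, βt), provided the edge joining the last two vertices
is the longest edge. -/
theorem stmt13 (α β s t : ℝ) (hβ : 0 < β) (hβα : β ≤ α)
    (hst : s ^ 2 + t ^ 2 = 1) (ht : 0 < t)
    (x₁ x₂ x₃ : E2) (h₁ : x₁ = pt 0 0) (h₂ : x₂ = pt α 0) (h₃ : x₃ = pt (β * s) (β * t))
    (hlong : α ≤ dist x₂ x₃)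
    (R : ℝ) (c : E2) (hc₁ : dist c x₁ = R) (hc₂ : dist c x₂ = R) (hc₃ : dist c x₃ = R) :
    (1 + |s|) / Real.sqrt (1 - |s|) ≤ 4 * Real.sqrt 2 * (R / α) := by
  have hα : 0 < α := lt_of_lt_of_le hβ hβα
  set a := dist x₂ x₃ with ha_def
  clear_value a
  have hR0 : 0 ≤ R := hc₁ ▸ dist_nonneg
  have e1 : (c 0)^2 + (c 1)^2 = R^2 := by
    have h := dist_sq2 c x₁
    rw [hc₁, h₁] at h; simp only [pt_app0, pt_app1] at h
    linear_combination -h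
  have e2 : (c 0 - α)^2 + (c 1)^2 = R^2 := by
    have h := dist_sq2 c x₂
    rw [hc₂, h₂] at h; simp only [pt_app0, pt_app1] at h
    linear_combination -h
  have e3 : (c 0 - β*s)^2 + (c 1 - β*t)^2 = R^2 := by
    have h := dist_sq2 c x₃
    rw [hc₃, h₃] at h; simp only [pt_app0, pt_app1] at h
    linear_combination -h
  have ea : a^2 = (α - β*s)^2 + (β*t)^2 := by
    rw [ha_def, h₂, h₃, dist_sq2]
    simp only [pt_app0, pt_app1]
    ring
  have hc0 : c 0 = α/2 := by
    have h12 : α * (2 * c 0) = α * α := by linear_combination e1 - e2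
    have := mul_left_cancel₀ hα.ne' h12
    linarith
  have hc1 : 2*t*(c 1) = β - α*s := by
    have h13 : β * (α*s + 2*t*(c 1)) = β * β := by
      linear_combination e1 - e3 + β^2*hst - 2*β*s*hc0
    have := mul_left_cancel₀ hβ.ne' h13
    linarith
  have hsq : (2*R*t)^2 = a^2 := by
    linear_combination (-(4*t^2))*e1 + (4*t^2*(c 0 + α/2))*hc0
      + (2*t*(c 1) + β - α*s)*hc1 - ea + (α^2 - β^2)*hst
  have hRt0 : 0 ≤ 2*R*t := by positivity
  have hkey : 2*R*t = a := by
    have hfac : (2*R*t - a)*(2*R*t + a) = 0 := by linear_combination hsq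
    rcases mul_eq_zero.mp hfac with h | h
    · linarith
    · linarith
  exact stmt13_endgame α a s t R hα hst ht hlong hR0 hkey

end
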